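/- Let E be an elliptic curve and P₁, P₂ points on E with P₁ + P₂ ≠ O. Let L_{P₁,P₂} denote the line function through P₁ and P₂ (the tangent when P₁ = P₂) divided by Z, and define g_{P₁,P₂} = L_{P₁,P₂} / L_{P₁+P₂, −(P₁+P₂)}. Then div(g_{P₁,P₂}) = (P₁) + (P₂) − (P₁ + P₂) − (O). -/

import Mathlib

open scoped Classical in
/-- Let `E` be an elliptic curve with function field `K`, and let `div` be the divisor map on
nonzero rational functions (a homomorphism from `Kˣ` to divisors). If `L P₁ P₂` denotes the
line function through `P₁` and `P₂` (divided by `Z`), with divisor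
`(P₁) + (P₂) + (−(P₁+P₂)) − 3(O)`, then the function
`g_{P₁,P₂} = L_{P₁,P₂} / L_{P₁+P₂, −(P₁+P₂)}` has divisor
`(P₁) + (P₂) − (P₁ + P₂) − (O)`. -/
theorem divisor_of_g {F : Type*} [Field F] (W : WeierstrassCurve.Affine F)
    (d : (FractionRing W.CoordinateRing)ˣ → (W.Point →₀ ℤ))
    (hd : ∀ f g : (FractionRing W.CoordinateRing)ˣ, d (f * g) = d f + d g)
    (L : W.Point → W.Point → (FractionRing W.CoordinateRing)ˣ)
    (hL : ∀ P₁ P₂ : W.Point,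
      d (L P₁ P₂) = Finsupp.single P₁ 1 + Finsupp.single P₂ 1 +
        Finsupp.single (-(P₁ + P₂)) 1 - Finsupp.single (0 : W.Point) 3)
    (P₁ P₂ : W.Point) (h : P₁ + P₂ ≠ 0) :
    d (L P₁ P₂ / L (P₁ + P₂) (-(P₁ + P₂))) =
      Finsupp.single P₁ 1 + Finsupp.single P₂ 1 -
        Finsupp.single (P₁ + P₂) 1 - Finsupp.single (0 : W.Point) 1 := by
  have hdiv : ∀ f g : (FractionRing W.CoordinateRing)ˣ, d (f / g) = d f - d g := by
    intro f g
    have h1 := hd (f / g) g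
    simp only [div_mul_cancel] at h1
    rw [h1]; abel
  rw [hdiv, hL, hL, add_neg_cancel, neg_zero]
  abel
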